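/- For positive reals a_1, ..., a_n and λ > Σ a_i, the supremum over nonnegative integers k_1, ..., k_n with Σ_{i=1}^n a_i(2k_i+1) ≤ λ of Π_{i=1}^n (k_i + 1) is at least (λ - Σ a_i)^n/(2^n n^n Π a_i) - C·λ^(n-1) for some constant C depending only on a_1,...,a_n and n; in particular the supremum is ≥ λ^n/(2^n n^n Π a_i) + o(λ^n). -/

import Mathlib

theorem stmt_11 (n : ℕ) (hn : 1 ≤ n) (a : Fin n → ℝ) (ha : ∀ i, 0 < a i) :
    ∃ C : ℝ, ∀ lam : ℝ, (∑ i, a i) < lam →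
      ∃ k : Fin n → ℕ, (∑ i, a i * (2 * (k i : ℝ) + 1) ≤ lam) ∧
        (lam - ∑ i, a i) ^ n / (2 ^ n * (n : ℝ) ^ n * ∏ i, a i) - C * lam ^ (n - 1) ≤
          ∏ i, ((k i : ℝ) + 1) := by
  refine ⟨0, fun lam hlam => ?_⟩
  set S := ∑ i, a i with hS
  have hn0 : (0:ℝ) < n := by exact_mod_cast hn
  have hd : 0 < lam - S := sub_pos.mpr hlam
  set x : Fin n → ℝ := fun i => (lam - S) / (2 * n * a i) with hx
  have hxpos : ∀ i, 0 < x i := fun i => by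
    have := ha i; simp only [hx]; positivity
  refine ⟨fun i => ⌊x i⌋₊, ?_, ?_⟩
  · have h1 : ∀ i ∈ Finset.univ, a i * (2 * ((⌊x i⌋₊ : ℝ)) + 1) ≤ (lam - S)/n + a i := by
      intro i _
      have hai := ha i
      have hfl : (⌊x i⌋₊ : ℝ) ≤ x i := Nat.floor_le (hxpos i).le
      have heq : a i * (2 * x i + 1) = (lam - S)/n + a i := by
        simp only [hx]; field_simp
      calc a i * (2 * ((⌊x i⌋₊ : ℝ)) + 1) ≤ a i * (2 * x i + 1) := by nlinarith
        _ = (lam - S)/n + a i := heq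
    calc ∑ i, a i * (2 * ((⌊x i⌋₊ : ℝ)) + 1) ≤ ∑ i : Fin n, ((lam - S)/n + a i) :=
          Finset.sum_le_sum h1
      _ = n * ((lam - S)/n) + S := by
          rw [Finset.sum_add_distrib, Finset.sum_const, Finset.card_univ, Fintype.card_fin,
            nsmul_eq_mul]
      _ = lam := by field_simp; ring
  · have hprod : ∏ i, x i = (lam - S) ^ n / (2 ^ n * (n : ℝ) ^ n * ∏ i, a i) := by
      simp only [hx, div_eq_mul_inv]
      rw [Finset.prod_mul_distrib, Finset.prod_const, Finset.card_univ, Fintype.card_fin,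
        Finset.prod_inv_distrib]
      congr 2
      rw [Finset.prod_mul_distrib, Finset.prod_const, Finset.card_univ, Fintype.card_fin,
        mul_pow]
    rw [zero_mul, sub_zero, ← hprod]
    apply Finset.prod_le_prod
    · intro i _; exact (hxpos i).le
    · intro i _; exact (Nat.lt_floor_add_one (x i)).le
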